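/- (Lemma 2(b) of the paper.) Let n ≥ 2 and let H(A,B) := (n − 1)(2 − n) det(A) ω²(A,B) be the reduced SGFT Lagrangian density. At any pair (A, B) with A invertible, the partial derivative of H with respect to B_{iβγ}, holding A fixed, equals 2(n − 2) det(A) [ λ_i^γ ω^β − λ_i^β ω^γ ]. -/

import Mathlib

open scoped BigOperators

variable {X : Type*} [NormedAddCommGroup X] [NormedSpace ℝ X]

theorem myDiffProd {ι : Type*} [DecidableEq ι] {u : Finset ι} {g : ι → X → ℝ} {x : X}
    (h : ∀ i ∈ u, DifferentiableAt ℝ (g i) x) :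
    DifferentiableAt ℝ (fun y => ∏ i ∈ u, g i y) x :=
  (HasFDerivAt.finset_prod (fun i hi => (h i hi).hasFDerivAt)).differentiableAt

theorem myDiffDet {n : ℕ} {M : X → Matrix (Fin n) (Fin n) ℝ} {x : X}
    (h : ∀ i j, DifferentiableAt ℝ (fun y => M y i j) x) :
    DifferentiableAt ℝ (fun y => (M y).det) x := by
  have e : (fun y => (M y).det)
      = fun y => ∑ σ : Equiv.Perm (Fin n), ((Equiv.Perm.sign σ : ℤ) : ℝ) * ∏ k, M y (σ k) k := by
    funext y; rw [Matrix.det_apply']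
  rw [e]
  exact DifferentiableAt.fun_sum fun σ _ => ((myDiffProd fun k _ => h (σ k) k).const_mul _)

theorem myDiffInvEntry {n : ℕ} {M : X → Matrix (Fin n) (Fin n) ℝ} {x : X}
    (h : ∀ i j, DifferentiableAt ℝ (fun y => M y i j) x)
    (hdet : (M x).det ≠ 0) (i j : Fin n) :
    DifferentiableAt ℝ (fun y => (M y)⁻¹ i j) x := by
  have e : (fun y => (M y)⁻¹ i j)
      = fun y => ((M y).det)⁻¹ * ((M y).updateRow j (Pi.single i 1)).det := by
    funext y
    rw [Matrix.inv_def, Matrix.smul_apply, Ring.inverse_eq_inv, smul_eq_mul,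
      Matrix.adjugate_apply]
  rw [e]
  refine DifferentiableAt.mul ((myDiffDet h).inv hdet) (myDiffDet ?_)
  intro a b
  rcases eq_or_ne a j with rfl | hne
  · simpa [Matrix.updateRow_apply] using differentiableAt_const _
  · simpa [Matrix.updateRow_apply, hne] using h a b

/-- The inverse-frame components λ_i^α of a frame matrix `A` (so that
Σ_i λ_i^α A_{iν} = δ^α_ν when `A` is invertible). -/
noncomputable def lamUp {n : ℕ} (A : Fin n → Fin n → ℝ) (i α : Fin n) : ℝ :=
  (Matrix.of A)⁻¹ α i

/-- The metric g_{μν} = Σ_i A_{iμ} A_{iν} built from the frame matrix `A`. -/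
noncomputable def gOf {n : ℕ} (A : Fin n → Fin n → ℝ) : Matrix (Fin n) (Fin n) ℝ :=
  Matrix.of fun μ ν => ∑ i, A i μ * A i ν

/-- ω_μ(A,B) = (1/(1−n)) Σ_{i,α} λ_i^α (B_{iμα} − B_{iαμ}), with the frame values `A`
and the frame-derivative values `B` treated as independent variables. -/
noncomputable def omegaOf {n : ℕ}
    (p : (Fin n → Fin n → ℝ) × (Fin n → Fin n → Fin n → ℝ)) (μ : Fin n) : ℝ :=
  (1 / (1 - (n : ℝ))) * ∑ i, ∑ α, lamUp p.1 i α * (p.2 i μ α - p.2 i α μ)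

/-- ω^β(A,B) = Σ_α g^{βα} ω_α. -/
noncomputable def omegaUpOf {n : ℕ}
    (p : (Fin n → Fin n → ℝ) × (Fin n → Fin n → Fin n → ℝ)) (β : Fin n) : ℝ :=
  ∑ α, (gOf p.1)⁻¹ β α * omegaOf p α

/-- ω²(A,B) = Σ_{μ,ν} g^{μν} ω_μ ω_ν. -/
noncomputable def omegaSqOf {n : ℕ}
    (p : (Fin n → Fin n → ℝ) × (Fin n → Fin n → Fin n → ℝ)) : ℝ :=
  ∑ μ, ∑ ν, (gOf p.1)⁻¹ μ ν * omegaOf p μ * omegaOf p ν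

/-- The reduced SGFT Lagrangian density H(A,B) = (n − 1)(2 − n) det(A) ω²(A,B). -/
noncomputable def HOf {n : ℕ}
    (p : (Fin n → Fin n → ℝ) × (Fin n → Fin n → Fin n → ℝ)) : ℝ :=
  ((n : ℝ) - 1) * (2 - (n : ℝ)) * (Matrix.of p.1).det * omegaSqOf p

section
variable {n : ℕ}
local notation "P" => (Fin n → Fin n → ℝ) × (Fin n → Fin n → Fin n → ℝ)

theorem gOf_eq (A : Fin n → Fin n → ℝ) : gOf A = (Matrix.of A).transpose * Matrix.of A := by
  ext a b; simp [gOf, Matrix.mul_apply, Matrix.transpose_apply]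

theorem det_gOf (A : Fin n → Fin n → ℝ) : (gOf A).det = (Matrix.of A).det ^ 2 := by
  rw [gOf_eq, Matrix.det_mul, Matrix.det_transpose, sq]

theorem diff_entry1 (i j : Fin n) (p : P) :
    DifferentiableAt ℝ (fun q : P => q.1 i j) p := by fun_prop

theorem diff_entry2 (i j k : Fin n) (p : P) :
    DifferentiableAt ℝ (fun q : P => q.2 i j k) p := by fun_prop

theorem diffHOf (A : Fin n → Fin n → ℝ) (B : Fin n → Fin n → Fin n → ℝ)
    (hA : (Matrix.of A).det ≠ 0) :
    DifferentiableAt ℝ (fun p : P => HOf p) (A, B) := by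
  have hgent : ∀ (a b : Fin n), DifferentiableAt ℝ (fun q : P => gOf q.1 a b) (A, B) := by
    intro a b
    have : (fun q : P => gOf q.1 a b) = fun q : P => ∑ k, q.1 k a * q.1 k b := rfl
    rw [this]
    exact DifferentiableAt.fun_sum fun k _ => (diff_entry1 k a _).mul (diff_entry1 k b _)
  have hdetg : (gOf A).det ≠ 0 := by
    rw [det_gOf]; exact pow_ne_zero _ hA
  have hginv : ∀ (a b : Fin n),
      DifferentiableAt ℝ (fun q : P => (gOf q.1)⁻¹ a b) (A, B) :=
    fun a b => myDiffInvEntry (M := fun q : P => gOf q.1) hgent hdetg a b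
  have hlam : ∀ (a b : Fin n), DifferentiableAt ℝ (fun q : P => lamUp q.1 a b) (A, B) := by
    intro a b
    exact myDiffInvEntry (M := fun q : P => Matrix.of q.1) (fun i j => diff_entry1 i j _) hA b a
  have homega : ∀ μ, DifferentiableAt ℝ (fun q : P => omegaOf q μ) (A, B) := by
    intro μ
    refine DifferentiableAt.const_mul ?_ _
    refine DifferentiableAt.fun_sum fun a _ => DifferentiableAt.fun_sum fun b _ => ?_
    exact (hlam a b).mul ((diff_entry2 a μ b _).sub (diff_entry2 a b μ _))
  have hsq : DifferentiableAt ℝ (fun q : P => omegaSqOf q) (A, B) := by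
    refine DifferentiableAt.fun_sum fun a _ => DifferentiableAt.fun_sum fun b _ => ?_
    exact ((hginv a b).mul (homega a)).mul (homega b)
  have hdet : DifferentiableAt ℝ (fun q : P => (Matrix.of q.1).det) (A, B) :=
    myDiffDet (M := fun q : P => Matrix.of q.1) fun i j => diff_entry1 i j _
  exact (hdet.const_mul _).mul hsq
end

theorem ginv_symm {n : ℕ} (A : Fin n → Fin n → ℝ) (μ ν : Fin n) :
    (gOf A)⁻¹ μ ν = (gOf A)⁻¹ ν μ := by
  have hT : (gOf A).transpose = gOf A := by
    ext a b; simp [gOf, Matrix.transpose_apply, mul_comm]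
  calc (gOf A)⁻¹ μ ν = ((gOf A)⁻¹).transpose ν μ := rfl
    _ = ((gOf A).transpose)⁻¹ ν μ := by rw [Matrix.transpose_nonsing_inv]
    _ = (gOf A)⁻¹ ν μ := by rw [hT]

/-- (Lemma 2(b) of the paper.) At any pair (A,B) with A invertible,
∂H/∂B_{iβγ} = 2(n − 2) det(A) [ λ_i^γ ω^β − λ_i^β ω^γ ]. -/
theorem sap_lemma2b
    (n : ℕ) (hn : 2 ≤ n)
    (A : Fin n → Fin n → ℝ) (B : Fin n → Fin n → Fin n → ℝ)
    (hA : IsUnit (Matrix.of A).det)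
    (i β γ : Fin n) :
    fderiv ℝ (fun p : (Fin n → Fin n → ℝ) × (Fin n → Fin n → Fin n → ℝ) => HOf p)
        (A, B) (0, fun i' β' γ' => if i' = i ∧ β' = β ∧ γ' = γ then (1:ℝ) else 0)
      = 2 * ((n : ℝ) - 2) * (Matrix.of A).det *
          (lamUp A i γ * omegaUpOf (A, B) β - lamUp A i β * omegaUpOf (A, B) γ) := by
  have hdetA : (Matrix.of A).det ≠ 0 := hA.ne_zero
  have hne : (1 : ℝ) - (n : ℝ) ≠ 0 := by
    have h2 : (2 : ℝ) ≤ (n : ℝ) := by exact_mod_cast hn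
    linarith
  set E : Fin n → Fin n → Fin n → ℝ :=
    fun i' β' γ' => if i' = i ∧ β' = β ∧ γ' = γ then (1:ℝ) else 0 with hE
  set v : (Fin n → Fin n → ℝ) × (Fin n → Fin n → Fin n → ℝ) := (0, E) with hv
  -- the line through (A,B) in direction v
  have hline : HasDerivAt (fun t : ℝ =>
      ((A, B) : (Fin n → Fin n → ℝ) × (Fin n → Fin n → Fin n → ℝ)) + t • v) v 0 := by
    simpa using (((hasDerivAt_id (0:ℝ)).smul_const v).const_add
      ((A, B) : (Fin n → Fin n → ℝ) × (Fin n → Fin n → Fin n → ℝ)))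
  have hdiff := diffHOf A B hdetA
  have h1 : HasDerivAt (fun t : ℝ => HOf (((A, B) :
      (Fin n → Fin n → ℝ) × (Fin n → Fin n → Fin n → ℝ)) + t • v))
      (fderiv ℝ (fun p : (Fin n → Fin n → ℝ) × (Fin n → Fin n → Fin n → ℝ) => HOf p)
        (A, B) v) 0 := by
    have hF : HasFDerivAt (fun p : (Fin n → Fin n → ℝ) × (Fin n → Fin n → Fin n → ℝ) => HOf p)
        (fderiv ℝ (fun p : (Fin n → Fin n → ℝ) × (Fin n → Fin n → Fin n → ℝ) => HOf p) (A, B))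
        ((fun t : ℝ => ((A, B) :
          (Fin n → Fin n → ℝ) × (Fin n → Fin n → Fin n → ℝ)) + t • v) 0) := by
      simpa using hdiff.hasFDerivAt
    exact hF.comp_hasDerivAt 0 hline
  -- data for the explicit polynomial
  set ω : Fin n → ℝ := omegaOf (A, B) with hω
  set d : Fin n → ℝ := fun μ => (1 / (1 - (n : ℝ))) *
    ((if μ = β then lamUp A i γ else 0) - (if μ = γ then lamUp A i β else 0)) with hd
  set C : ℝ := ((n : ℝ) - 1) * (2 - (n : ℝ)) * (Matrix.of A).det with hC
  have hfst : ∀ t : ℝ, (((A, B) :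
      (Fin n → Fin n → ℝ) × (Fin n → Fin n → Fin n → ℝ)) + t • v).1 = A := by
    intro t; simp [hv]
  have key1 : ∀ (t : ℝ) (μ : Fin n),
      omegaOf (((A, B) : (Fin n → Fin n → ℝ) × (Fin n → Fin n → Fin n → ℝ)) + t • v) μ
        = ω μ + t * d μ := by
    intro t μ
    have hsnd : (((A, B) :
        (Fin n → Fin n → ℝ) × (Fin n → Fin n → Fin n → ℝ)) + t • v).2
        = fun a b c => B a b c + t * E a b c := by
      funext a b c; simp [hv]
    rw [omegaOf, hfst, hsnd]
    have expand : ∀ (a b : Fin n),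
        lamUp A a b * ((B a μ b + t * E a μ b) - (B a b μ + t * E a b μ))
          = lamUp A a b * (B a μ b - B a b μ)
            + t * (lamUp A a b * E a μ b) - t * (lamUp A a b * E a b μ) := by
      intro a b; ring
    simp only [expand, Finset.sum_sub_distrib, Finset.sum_add_distrib, ← Finset.mul_sum]
    have hS1 : (∑ a, ∑ b, lamUp A a b * E a μ b)
        = if μ = β then lamUp A i γ else 0 := by
      rcases eq_or_ne μ β with rfl | hμ
      · simp [hE, ite_and, mul_ite, mul_one, mul_zero, Finset.sum_ite_eq']
      · simp [hE, hμ]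
    have hS2 : (∑ a, ∑ b, lamUp A a b * E a b μ)
        = if μ = γ then lamUp A i β else 0 := by
      rcases eq_or_ne μ γ with rfl | hμ
      · simp [hE, ite_and, mul_ite, mul_one, mul_zero, Finset.sum_ite_eq']
      · simp [hE, hμ]
    rw [hS1, hS2, hω, omegaOf, hd]
    ring
  -- the composed function is an explicit quadratic polynomial in t
  have hφ : ∀ t : ℝ, HOf (((A, B) :
      (Fin n → Fin n → ℝ) × (Fin n → Fin n → Fin n → ℝ)) + t • v)
      = C * (∑ μ, ∑ ν, (gOf A)⁻¹ μ ν * ω μ * ω ν)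
        + t * (C * (∑ μ, ∑ ν, (gOf A)⁻¹ μ ν * (d μ * ω ν + ω μ * d ν)))
        + t ^ 2 * (C * (∑ μ, ∑ ν, (gOf A)⁻¹ μ ν * d μ * d ν)) := by
    intro t
    rw [HOf, omegaSqOf, hfst]
    simp only [key1]
    rw [show ((n : ℝ) - 1) * (2 - (n : ℝ)) * (Matrix.of A).det = C from rfl]
    rw [Finset.mul_sum, Finset.mul_sum, Finset.mul_sum, Finset.mul_sum, Finset.mul_sum,
      Finset.mul_sum, ← Finset.sum_add_distrib, ← Finset.sum_add_distrib]
    refine Finset.sum_congr rfl fun μ _ => ?_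
    rw [Finset.mul_sum, Finset.mul_sum, Finset.mul_sum, Finset.mul_sum, Finset.mul_sum,
      Finset.mul_sum, ← Finset.sum_add_distrib, ← Finset.sum_add_distrib]
    refine Finset.sum_congr rfl fun ν _ => ?_
    ring
  set K1 : ℝ := C * (∑ μ, ∑ ν, (gOf A)⁻¹ μ ν * (d μ * ω ν + ω μ * d ν)) with hK1
  have h2 : HasDerivAt (fun t : ℝ => HOf (((A, B) :
      (Fin n → Fin n → ℝ) × (Fin n → Fin n → Fin n → ℝ)) + t • v)) K1 0 := by
    have hpoly : HasDerivAt (fun t : ℝ =>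
        C * (∑ μ, ∑ ν, (gOf A)⁻¹ μ ν * ω μ * ω ν)
          + t * K1
          + t ^ 2 * (C * (∑ μ, ∑ ν, (gOf A)⁻¹ μ ν * d μ * d ν))) K1 0 := by
      have ha := (hasDerivAt_id (0:ℝ)).mul_const K1
      have hb := (hasDerivAt_pow 2 (0:ℝ)).mul_const
        (C * (∑ μ, ∑ ν, (gOf A)⁻¹ μ ν * d μ * d ν))
      have := ((hasDerivAt_const (0:ℝ)
        (C * (∑ μ, ∑ ν, (gOf A)⁻¹ μ ν * ω μ * ω ν))).add ha).add hb
      exact this.congr_deriv (by simp)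
    exact hpoly.congr_of_eventuallyEq (Filter.Eventually.of_forall fun t => hφ t)
  have hfd : fderiv ℝ (fun p : (Fin n → Fin n → ℝ) × (Fin n → Fin n → Fin n → ℝ) => HOf p)
      (A, B) v = K1 := h1.unique h2
  rw [hfd]
  -- now evaluate K1
  have swap : (∑ μ, ∑ ν, (gOf A)⁻¹ μ ν * (d μ * ω ν + ω μ * d ν))
      = 2 * ∑ μ, d μ * omegaUpOf (A, B) μ := by
    have e1 : (∑ μ, ∑ ν, (gOf A)⁻¹ μ ν * (d μ * ω ν + ω μ * d ν))
        = (∑ μ, ∑ ν, (gOf A)⁻¹ μ ν * (d μ * ω ν))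
          + (∑ μ, ∑ ν, (gOf A)⁻¹ μ ν * (ω μ * d ν)) := by
      simp [mul_add, Finset.sum_add_distrib]
    have e2 : (∑ μ, ∑ ν, (gOf A)⁻¹ μ ν * (ω μ * d ν))
        = (∑ μ, ∑ ν, (gOf A)⁻¹ μ ν * (d μ * ω ν)) := by
      rw [Finset.sum_comm]
      refine Finset.sum_congr rfl fun μ _ => Finset.sum_congr rfl fun ν _ => ?_
      rw [ginv_symm A ν μ]; ring
    have e3 : (∑ μ, ∑ ν, (gOf A)⁻¹ μ ν * (d μ * ω ν))
        = ∑ μ, d μ * omegaUpOf (A, B) μ := by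
      refine Finset.sum_congr rfl fun μ _ => ?_
      rw [omegaUpOf, Finset.mul_sum]
      refine Finset.sum_congr rfl fun ν _ => ?_
      rw [hω]; ring
    rw [e1, e2, e3]; ring
  have dsum : (∑ μ, d μ * omegaUpOf (A, B) μ)
      = (1 / (1 - (n : ℝ))) *
        (lamUp A i γ * omegaUpOf (A, B) β - lamUp A i β * omegaUpOf (A, B) γ) := by
    simp only [hd, sub_mul, ite_mul, zero_mul, mul_assoc, mul_sub]
    rw [Finset.sum_sub_distrib, ← Finset.mul_sum, ← Finset.mul_sum,
      Finset.sum_ite_eq', Finset.sum_ite_eq']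
    simp [mul_sub]
  rw [hK1, swap, dsum, hC]
  field_simp
  ring
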